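/- Heisenberg–Gabor limit: let f : ℝ → ℂ be a Schwartz function with ‖f‖_{L²} = 1 (so |f|² is a probability density), and let f̂ denote its Fourier transform f̂(ξ) = ∫ f(t)·e^{−2πi t ξ} dt. Then the product of the time spread and the frequency spread about the origin satisfies (∫_ℝ t²·|f(t)|² dt) · (∫_ℝ ξ²·|f̂(ξ)|² dξ) ≥ 1/(16π²). Consequently, with Δt = (∫ t²|f|²)^{1/2} and Δf = (∫ ξ²|f̂|²)^{1/2}, one has Δt·Δf ≥ 1/(4π). -/

import Mathlib

open Real MeasureTheory
open scoped FourierTransform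
open Complex
open scoped ComplexConjugate

lemma fourier_conj (u : ℝ → ℂ) (ξ : ℝ) :
    𝓕 (fun x => conj (u x)) ξ = conj (𝓕 u (-ξ)) := by
  rw [Real.fourier_real_eq_integral_exp_smul, Real.fourier_real_eq_integral_exp_smul,
    ← integral_conj]
  congr 1 with v
  rw [smul_eq_mul, smul_eq_mul, map_mul, ← Complex.exp_conj]
  have : (starRingEnd ℂ) (↑(-2 * π * v * -ξ) * I) = ↑(-2 * π * v * ξ) * I := by
    rw [map_mul, Complex.conj_ofReal, Complex.conj_I]
    push_cast; ring
  rw [this, mul_comm]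

lemma real_flip {g h : ℝ → ℂ} (hg : Integrable g) (hh : Integrable h) :
    ∫ ξ, 𝓕 g ξ * h ξ = ∫ x, g x * 𝓕 h x := by
  have hL : Continuous fun p : ℝ × ℝ => (innerₗ ℝ) p.1 p.2 := by
    exact continuous_inner
  have hflip : (innerₗ ℝ).flip = innerₗ ℝ := by
    apply LinearMap.ext; intro x; apply LinearMap.ext; intro y
    simp [real_inner_comm]
  have := VectorFourier.integral_fourierIntegral_smul_eq_flip
    (e := Real.fourierChar) (L := innerₗ ℝ) (μ := volume) (ν := volume)
    Real.continuous_fourierChar hL hg hh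
  rw [hflip] at this
  simp only [smul_eq_mul] at this; exact this

lemma schwartz_sq_integrable (g : SchwartzMap ℝ ℂ) :
    Integrable (fun t : ℝ => ‖g t‖ ^ 2) := by
  refine (g.integrable.norm.const_mul (SchwartzMap.seminorm ℝ 0 0 g)).mono'
    ((g.continuous.norm.pow 2).aestronglyMeasurable) ?_
  filter_upwards with t
  have hb : ‖g t‖ ≤ SchwartzMap.seminorm ℝ 0 0 g := by
    simpa using SchwartzMap.le_seminorm ℝ 0 0 g t
  rw [Real.norm_eq_abs, _root_.abs_of_nonneg (by positivity)]
  calc ‖g t‖ ^ 2 = ‖g t‖ * ‖g t‖ := sq ‖g t‖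
    _ ≤ SchwartzMap.seminorm ℝ 0 0 g * ‖g t‖ :=
        mul_le_mul_of_nonneg_right hb (norm_nonneg _)

lemma parseval_schwartz (g : SchwartzMap ℝ ℂ) :
    ∫ ξ : ℝ, ‖𝓕 (⇑g) ξ‖ ^ 2 = ∫ t : ℝ, ‖g t‖ ^ 2 := by
  have hint : Integrable (𝓕 ⇑g) := by
    rw [← SchwartzMap.fourier_coe]
    exact (SchwartzMap.fourierTransformCLM ℂ g).integrable
  have hconj : Integrable (fun ξ => (starRingEnd ℂ) (𝓕 (⇑g) ξ)) :=
    (Complex.conjCLE.toContinuousLinearMap).integrable_comp hint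
  have key := real_flip (g := ⇑g) g.integrable hconj
  have hFh : ∀ x : ℝ, 𝓕 (fun ξ => (starRingEnd ℂ) (𝓕 (⇑g) ξ)) x = (starRingEnd ℂ) (g x) := by
    intro x
    rw [fourier_conj, ← Real.fourierInv_eq_fourier_neg,
      Continuous.fourierInv_fourier_eq g.continuous g.integrable hint]
  simp_rw [hFh] at key
  simp_rw [Complex.mul_conj, Complex.normSq_eq_norm_sq] at key
  have int1 : Integrable (fun ξ : ℝ => ‖𝓕 (⇑g) ξ‖ ^ 2) := by
    have := schwartz_sq_integrable (SchwartzMap.fourierTransformCLM ℂ g)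
    simpa [SchwartzMap.fourierTransformCLM_apply, SchwartzMap.fourier_coe] using this
  have e1 := Complex.ofRealCLM.integral_comp_comm int1
  have e2 := Complex.ofRealCLM.integral_comp_comm (schwartz_sq_integrable g)
  simp only [Complex.ofRealCLM_apply] at e1 e2
  have k2 : ((∫ ξ : ℝ, ‖𝓕 (⇑g) ξ‖ ^ 2 : ℝ) : ℂ) = ((∫ t : ℝ, ‖g t‖ ^ 2 : ℝ) : ℂ) := by
    rw [← e1, ← e2]; exact key
  exact_mod_cast k2

lemma schwartz_mul_integrable (f g : SchwartzMap ℝ ℂ) (k : ℕ) :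
    Integrable (fun t : ℝ => |t| ^ k * (‖f t‖ * ‖g t‖)) := by
  refine ((f.integrable_pow_mul volume k).const_mul (SchwartzMap.seminorm ℝ 0 0 g)).mono'
    (Continuous.aestronglyMeasurable (by
      exact ((_root_.continuous_abs.pow k).mul (f.continuous.norm.mul g.continuous.norm)))) ?_
  filter_upwards with t
  have hb : ‖g t‖ ≤ SchwartzMap.seminorm ℝ 0 0 g := by
    simpa using SchwartzMap.le_seminorm ℝ 0 0 g t
  rw [Real.norm_eq_abs, _root_.abs_of_nonneg (by positivity), Real.norm_eq_abs]
  calc |t| ^ k * (‖f t‖ * ‖g t‖) ≤ |t| ^ k * (‖f t‖ * SchwartzMap.seminorm ℝ 0 0 g) := by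
        gcongr
    _ = SchwartzMap.seminorm ℝ 0 0 g * (|t| ^ k * ‖f t‖) := by ring

lemma int_c {φ : ℝ → ℂ} (hφ : Continuous φ) (f g : SchwartzMap ℝ ℂ) (k : ℕ) (c : ℝ)
    (h : ∀ t, ‖φ t‖ ≤ c * (|t| ^ k * (‖f t‖ * ‖g t‖))) : Integrable φ := by
  refine ((schwartz_mul_integrable f g k).const_mul c).mono' hφ.aestronglyMeasurable ?_
  filter_upwards with t using h t

lemma ibp_re (f : SchwartzMap ℝ ℂ) (hf : ∫ t : ℝ, ‖f t‖ ^ 2 = 1) :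
    (∫ t : ℝ, (t : ℂ) * (deriv (⇑f) t * conj (f t))).re = -(1/2) := by
  set f' : SchwartzMap ℝ ℂ := SchwartzMap.derivCLM ℝ ℂ f with hf'def
  have hf' : ∀ t, f' t = deriv (⇑f) t := fun t => SchwartzMap.derivCLM_apply ℝ f t
  have hder : Continuous (deriv (⇑f)) := by
    have := f'.continuous; simpa [funext hf'] using this
  -- derivative facts
  have hu : ∀ x : ℝ, HasDerivAt (fun t : ℝ => (t : ℂ)) 1 x := by
    intro x
    simpa using (hasDerivAt_id x).ofReal_comp
  have hd : ∀ x : ℝ, HasDerivAt (⇑f) (deriv (⇑f) x) x :=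
    fun x => (f.differentiable x).hasDerivAt
  have hcj : ∀ x : ℝ, HasDerivAt (fun t => conj (f t)) (conj (deriv (⇑f) x)) x := by
    intro x
    have := (Complex.conjCLE.hasFDerivAt (x := f x)).comp_hasDerivAt x (hd x)
    exact this
  have hv : ∀ x : ℝ, HasDerivAt (fun t => f t * conj (f t))
      (deriv (⇑f) x * conj (f x) + f x * conj (deriv (⇑f) x)) x :=
    fun x => (hd x).mul (hcj x)
  -- integrability
  have key_bound : ∀ t : ℝ, ‖f t * conj (f t)‖ = ‖f t‖ * ‖f t‖ := by
    intro t; rw [norm_mul, RCLike.norm_conj]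
  have int_uv' : Integrable (fun t : ℝ =>
      (t : ℂ) * (deriv (⇑f) t * conj (f t) + f t * conj (deriv (⇑f) t))) := by
    refine int_c ?_ f f' 1 2 ?_
    · exact Complex.continuous_ofReal.mul
        ((hder.mul (Complex.continuous_conj.comp f.continuous)).add
          (f.continuous.mul (Complex.continuous_conj.comp hder)))
    · intro t
      rw [norm_mul, Complex.norm_real, Real.norm_eq_abs, pow_one, hf' t]
      calc |t| * ‖deriv (⇑f) t * conj (f t) + f t * conj (deriv (⇑f) t)‖
          ≤ |t| * (‖deriv (⇑f) t * conj (f t)‖ + ‖f t * conj (deriv (⇑f) t)‖) := by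
            gcongr; exact norm_add_le _ _
        _ = 2 * (|t| * (‖f t‖ * ‖deriv (⇑f) t‖)) := by
            rw [norm_mul, norm_mul, RCLike.norm_conj, RCLike.norm_conj]; ring
        _ = 2 * (|t| * (‖f t‖ * ‖f' t‖)) := by rw [hf' t]
  have int_u'v : Integrable (fun t : ℝ => (1 : ℂ) * (f t * conj (f t))) := by
    refine int_c ?_ f f 0 1 ?_
    · exact continuous_const.mul (f.continuous.mul (Complex.continuous_conj.comp f.continuous))
    · intro t
      simp [key_bound t]
  have int_uv : Integrable (fun t : ℝ => (t : ℂ) * (f t * conj (f t))) := by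
    refine int_c ?_ f f 1 1 ?_
    · exact Complex.continuous_ofReal.mul
        (f.continuous.mul (Complex.continuous_conj.comp f.continuous))
    · intro t
      rw [norm_mul, Complex.norm_real, Real.norm_eq_abs, key_bound t, pow_one, one_mul]
  -- integration by parts
  have ibp := integral_mul_deriv_eq_deriv_mul_of_integrable (fun x _ => hu x) (fun x _ => hv x)
    (by exact int_uv') (by exact int_u'v) (by exact int_uv)
  simp only [one_mul] at ibp
  -- right side equals -1
  have hrhs : ∫ t : ℝ, f t * conj (f t) = 1 := by
    have e2 := Complex.ofRealCLM.integral_comp_comm (schwartz_sq_integrable f)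
    simp only [Complex.ofRealCLM_apply] at e2
    have : ∀ t : ℝ, f t * conj (f t) = ((‖f t‖ ^ 2 : ℝ) : ℂ) := by
      intro t
      rw [Complex.mul_conj, Complex.normSq_eq_norm_sq]
    simp_rw [this, e2, hf, Complex.ofReal_one]
  -- split the left side
  have intI : Integrable (fun t : ℝ => (t : ℂ) * (deriv (⇑f) t * conj (f t))) := by
    refine int_c ?_ f f' 1 1 ?_
    · exact Complex.continuous_ofReal.mul (hder.mul (Complex.continuous_conj.comp f.continuous))
    · intro t
      rw [norm_mul, Complex.norm_real, Real.norm_eq_abs, norm_mul, RCLike.norm_conj, pow_one,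
        one_mul, hf' t]
      exact le_of_eq (by ring)
  have intJ : Integrable (fun t : ℝ => (t : ℂ) * (f t * conj (deriv (⇑f) t))) := by
    refine int_c ?_ f f' 1 1 ?_
    · exact Complex.continuous_ofReal.mul (f.continuous.mul (Complex.continuous_conj.comp hder))
    · intro t
      rw [norm_mul, Complex.norm_real, Real.norm_eq_abs, norm_mul, RCLike.norm_conj, pow_one,
        one_mul, hf' t]
  rw [show (fun x : ℝ => (x : ℂ) * (deriv (⇑f) x * conj (f x) + f x * conj (deriv (⇑f) x)))
      = (fun x : ℝ => (x : ℂ) * (deriv (⇑f) x * conj (f x)) + (x : ℂ) * (f x * conj (deriv (⇑f) x)))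
      from funext fun t => by ring] at ibp
  rw [integral_add intI intJ, hrhs] at ibp
  have hJ : ∫ t : ℝ, (t : ℂ) * (f t * conj (deriv (⇑f) t))
      = conj (∫ t : ℝ, (t : ℂ) * (deriv (⇑f) t * conj (f t))) := by
    rw [← integral_conj]
    congr 1 with t
    simp [mul_comm]
  rw [hJ] at ibp
  have := congrArg Complex.re ibp
  simp only [Complex.add_re, Complex.conj_re, Complex.neg_re, Complex.one_re] at this
  linarith

lemma cs_step (f : SchwartzMap ℝ ℂ) :
    ‖∫ t : ℝ, (t : ℂ) * (deriv (⇑f) t * conj (f t))‖ ≤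
      Real.sqrt (∫ t : ℝ, t ^ 2 * ‖f t‖ ^ 2) * Real.sqrt (∫ t : ℝ, ‖deriv (⇑f) t‖ ^ 2) := by
  set f' : SchwartzMap ℝ ℂ := SchwartzMap.derivCLM ℝ ℂ f with hf'def
  have hf' : ∀ t, f' t = deriv (⇑f) t := fun t => SchwartzMap.derivCLM_apply ℝ f t
  have hder : Continuous (deriv (⇑f)) := by
    have := f'.continuous; simpa [funext hf'] using this
  set φ : ℝ → ℝ := fun t => |t| * ‖f t‖ with hφdef
  set ψ : ℝ → ℝ := fun t => ‖deriv (⇑f) t‖ with hψdef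
  have hφm : AEStronglyMeasurable φ (volume : Measure ℝ) :=
    (_root_.continuous_abs.mul f.continuous.norm).aestronglyMeasurable
  have hψm : AEStronglyMeasurable ψ (volume : Measure ℝ) := hder.norm.aestronglyMeasurable
  have hφ2 : Integrable (fun t => φ t ^ 2) := by
    have := schwartz_mul_integrable f f 2
    refine this.congr ?_
    filter_upwards with t
    simp only [hφdef, mul_pow, sq]
    ring
  have hψ2 : Integrable (fun t => ψ t ^ 2) := by
    have := schwartz_sq_integrable f'
    refine this.congr ?_
    filter_upwards with t
    simp only [hψdef, hf' t]
  have h2 : ENNReal.ofReal (2:ℝ) = 2 := by norm_num [ENNReal.ofReal_ofNat]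
  have hφLp : MemLp φ (ENNReal.ofReal (2:ℝ)) volume := by
    rw [h2]; exact (memLp_two_iff_integrable_sq hφm).2 hφ2
  have hψLp : MemLp ψ (ENNReal.ofReal (2:ℝ)) volume := by
    rw [h2]; exact (memLp_two_iff_integrable_sq hψm).2 hψ2
  have hpq : (2:ℝ).HolderConjugate 2 := Real.HolderConjugate.two_two
  have hold := integral_mul_le_Lp_mul_Lq_of_nonneg hpq
    (Filter.Eventually.of_forall fun t => by positivity)
    (Filter.Eventually.of_forall fun t => norm_nonneg _) hφLp hψLp
  have he : ∀ x : ℝ, x ^ (2:ℝ) = x ^ (2:ℕ) := fun x => by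
    rw [show (2:ℝ) = ((2:ℕ):ℝ) by norm_num, Real.rpow_natCast]
  simp only [he] at hold
  calc ‖∫ t : ℝ, (t : ℂ) * (deriv (⇑f) t * conj (f t))‖
      ≤ ∫ t : ℝ, ‖(t : ℂ) * (deriv (⇑f) t * conj (f t))‖ := norm_integral_le_integral_norm _
    _ = ∫ t : ℝ, φ t * ψ t := by
        congr 1 with t
        rw [norm_mul, Complex.norm_real, Real.norm_eq_abs, norm_mul, RCLike.norm_conj]
        simp only [hφdef, hψdef]; ring
    _ ≤ (∫ t : ℝ, φ t ^ (2:ℕ)) ^ ((1:ℝ)/2) * (∫ t : ℝ, ψ t ^ (2:ℕ)) ^ ((1:ℝ)/2) := hold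
    _ = Real.sqrt (∫ t : ℝ, t ^ 2 * ‖f t‖ ^ 2) * Real.sqrt (∫ t : ℝ, ‖deriv (⇑f) t‖ ^ 2) := by
        rw [← Real.sqrt_eq_rpow, ← Real.sqrt_eq_rpow]
        congr 2
        · congr 1 with t
          simp only [hφdef, mul_pow, _root_.sq_abs]

lemma deriv_l2 (f : SchwartzMap ℝ ℂ) :
    ∫ t : ℝ, ‖deriv (⇑f) t‖ ^ 2 = 4 * π ^ 2 * ∫ ξ : ℝ, ξ ^ 2 * ‖𝓕 (⇑f) ξ‖ ^ 2 := by
  set f' : SchwartzMap ℝ ℂ := SchwartzMap.derivCLM ℝ ℂ f with hf'def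
  have hf' : ⇑f' = deriv (⇑f) := funext fun t => SchwartzMap.derivCLM_apply ℝ f t
  have hpar := parseval_schwartz f'
  rw [hf'] at hpar
  have hfd := Real.fourier_deriv f.integrable f.differentiable
    (by rw [← hf']; exact f'.integrable)
  rw [hfd] at hpar
  rw [← hpar]
  rw [← MeasureTheory.integral_const_mul]
  congr 1 with ξ
  simp only []
  rw [norm_smul]
  have h1 : ‖(2 * ↑π * Complex.I : ℂ)‖ = 2 * π := by
    simp [norm_mul, Complex.norm_real, Real.norm_eq_abs, _root_.abs_of_pos pi_pos]
  have h2 : ‖(ξ:ℂ)‖ = |ξ| := by simp [Complex.norm_real, Real.norm_eq_abs]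
  rw [norm_mul, h1, h2, mul_pow, mul_pow, _root_.sq_abs]
  ring


/-- Heisenberg–Gabor limit: for a unit-energy Schwartz signal `f`, the product
of the time spread and the frequency spread about the origin is at least
`1/(16π²)`; consequently `Δt · Δf ≥ 1/(4π)`. -/
theorem heisenberg_gabor_limit
    (f : SchwartzMap ℝ ℂ) (hf : ∫ t : ℝ, ‖f t‖ ^ 2 = 1) :
    1 / (16 * π ^ 2) ≤
      (∫ t : ℝ, t ^ 2 * ‖f t‖ ^ 2) * (∫ ξ : ℝ, ξ ^ 2 * ‖𝓕 (⇑f) ξ‖ ^ 2) ∧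
    1 / (4 * π) ≤
      Real.sqrt (∫ t : ℝ, t ^ 2 * ‖f t‖ ^ 2) *
        Real.sqrt (∫ ξ : ℝ, ξ ^ 2 * ‖𝓕 (⇑f) ξ‖ ^ 2) := by
  have hπ : (0:ℝ) < π := pi_pos
  set P := ∫ t : ℝ, t ^ 2 * ‖f t‖ ^ 2 with hPdef
  set Q := ∫ ξ : ℝ, ξ ^ 2 * ‖𝓕 (⇑f) ξ‖ ^ 2 with hQdef
  have hP : 0 ≤ P := integral_nonneg fun t => by positivity
  have hQ : 0 ≤ Q := integral_nonneg fun t => by positivity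
  have hre := ibp_re f hf
  have h1 : (1:ℝ)/2 ≤ ‖∫ t : ℝ, (t : ℂ) * (deriv (⇑f) t * conj (f t))‖ := by
    have h := Complex.abs_re_le_norm (∫ t : ℝ, (t : ℂ) * (deriv (⇑f) t * conj (f t)))
    rw [hre] at h
    rw [abs_neg, abs_of_pos (by norm_num : (0:ℝ) < 1/2)] at h
    linarith
  have h2 := cs_step f
  have hD := deriv_l2 f
  rw [← hQdef] at hD
  have hsD : Real.sqrt (∫ t : ℝ, ‖deriv (⇑f) t‖ ^ 2) = 2 * π * Real.sqrt Q := by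
    rw [hD, show 4 * π ^ 2 * Q = (2*π)^2 * Q by ring, Real.sqrt_mul (by positivity),
      Real.sqrt_sq (by positivity)]
  have key : (1:ℝ)/2 ≤ Real.sqrt P * (2 * π * Real.sqrt Q) := by
    rw [← hsD]
    exact le_trans h1 h2
  have hs : 1/(4*π) ≤ Real.sqrt P * Real.sqrt Q := by
    rw [div_le_iff₀ (by positivity)]
    nlinarith [Real.sqrt_nonneg P, Real.sqrt_nonneg Q]
  refine ⟨?_, hs⟩
  have h3 : (1/(4*π))^2 ≤ (Real.sqrt P * Real.sqrt Q)^2 :=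
    pow_le_pow_left₀ (by positivity) hs 2
  have h4 : (Real.sqrt P * Real.sqrt Q)^2 = P * Q := by
    rw [mul_pow, Real.sq_sqrt hP, Real.sq_sqrt hQ]
  have h5 : (1/(4*π))^2 = 1/(16 * π^2) := by
    field_simp; ring
  rw [h4, h5] at h3
  exact h3
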